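/- For every 0 < r₀ < 1 and every integer N ≥ 1 there exist smooth functions ρ₁, …, ρ_N : ℝ² → ℝ with 0 ≤ ρ_k ≤ 1 for each k, such that: (i) the support of each ρ_k is compact and contained in the open ball B_{r₀}(0) ⊂ ℝ²; (ii) the supports of ρ_k and ρ_h are disjoint whenever k ≠ h; (iii) ∫_{ℝ²} |∇ρ_k(x)|² dx < 2π/N for each k; and (iv) for each k there exists a point x_k with ρ_k(x_k) = 1. -/

import Mathlib

open MeasureTheory
open scoped ContDiff

noncomputable section AuxBumpConstruction

set_option maxHeartbeats 1000000 in
private lemma aux_exists_bump (c : EuclideanSpace ℝ (Fin 2)) (b δ : ℝ) (hb : 0 < b) (hδ : 0 < δ) :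
    ∃ ρ : EuclideanSpace ℝ (Fin 2) → ℝ,
      ContDiff ℝ ∞ ρ ∧ (∀ x, 0 ≤ ρ x ∧ ρ x ≤ 1) ∧
      tsupport ρ ⊆ Metric.closedBall c b ∧ ρ c = 1 ∧
      (∫ x, ‖gradient ρ x‖ ^ 2) < δ := by
  classical
  have hπ : (0:ℝ) < Real.pi := Real.pi_pos
  -- the cut-off function
  set χ : ℝ → ℝ := fun t => Real.smoothTransition (1 - t) with hχdef
  have hone : (1 : WithTop ℕ∞) ≤ ∞ := by exact_mod_cast le_top
  have hχcd : ContDiff ℝ ∞ χ :=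
    Real.smoothTransition.contDiff.comp (contDiff_const.sub contDiff_id)
  have hχ1 : ∀ t : ℝ, t ≤ 0 → χ t = 1 := fun t ht =>
    Real.smoothTransition.one_of_one_le (by linarith)
  have hχ0 : ∀ t : ℝ, 1 ≤ t → χ t = 0 := fun t ht =>
    Real.smoothTransition.zero_of_nonpos (by linarith)
  have hχmem : ∀ t : ℝ, 0 ≤ χ t ∧ χ t ≤ 1 := fun t =>
    ⟨Real.smoothTransition.nonneg _, Real.smoothTransition.le_one _⟩
  have hχdiff : Differentiable ℝ χ := hχcd.differentiable (lt_of_lt_of_le zero_lt_one hone).ne'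
  set D : ℝ → ℝ := deriv χ with hDdef
  have hDcont : Continuous D := hχcd.continuous_deriv hone
  have hD0 : ∀ t : ℝ, t ∉ Set.Icc (0:ℝ) 1 → D t = 0 := by
    intro t ht
    rw [Set.mem_Icc, not_and_or, not_le, not_le] at ht
    rcases ht with ht | ht
    · have hev : χ =ᶠ[nhds t] fun _ => 1 := by
        filter_upwards [Iio_mem_nhds ht] with s hs using hχ1 s (le_of_lt hs)
      rw [hDdef, hev.deriv_eq]
      exact deriv_const t 1
    · have hev : χ =ᶠ[nhds t] fun _ => 0 := by
        filter_upwards [Ioi_mem_nhds ht] with s hs using hχ0 s (le_of_lt hs)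
      rw [hDdef, hev.deriv_eq]
      exact deriv_const t 0
  have hDsupp : HasCompactSupport D := HasCompactSupport.intro isCompact_Icc hD0
  obtain ⟨t₀, ht₀⟩ := (continuous_abs.comp hDcont).exists_forall_ge_of_hasCompactSupport
      (hDsupp.comp_left abs_zero)
  set C : ℝ := max (|D t₀|) 1 with hCdef
  have hC1 : (1:ℝ) ≤ C := le_max_right _ _
  have hC0 : (0:ℝ) < C := lt_of_lt_of_le one_pos hC1
  have hCb : ∀ t, |D t| ≤ C := fun t => le_trans (ht₀ t) (le_max_left _ _)
  -- the constants
  set L : ℝ := max 1 (16 * Real.pi * C ^ 2 / δ) with hLdef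
  have hL1 : (1:ℝ) ≤ L := le_max_left _ _
  have hLpos : (0:ℝ) < L := lt_of_lt_of_le one_pos hL1
  have hLge : 16 * Real.pi * C ^ 2 / δ ≤ L := le_max_right _ _
  have hLδ : 8 * Real.pi * C ^ 2 / L < δ := by
    have h16 : (0:ℝ) < 16 * Real.pi * C ^ 2 / δ := by positivity
    have h1 : 8 * Real.pi * C ^ 2 / L ≤ 8 * Real.pi * C ^ 2 / (16 * Real.pi * C ^ 2 / δ) :=
      div_le_div_of_nonneg_left (by positivity) h16 hLge
    calc 8 * Real.pi * C ^ 2 / L ≤ 8 * Real.pi * C ^ 2 / (16 * Real.pi * C ^ 2 / δ) := h1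
      _ = δ / 2 := by field_simp; ring
      _ < δ := by linarith
  set ε : ℝ := b * Real.exp (-(L/2)) with hεdef
  have hε : 0 < ε := by positivity
  have hexp2 : Real.exp (-(L/2)) ^ 2 = Real.exp (-L) := by
    rw [← Real.exp_nat_mul]; ring_nf
  have hε2 : ε ^ 2 = b ^ 2 * Real.exp (-L) := by rw [hεdef, mul_pow, hexp2]
  have hb2 : ε ^ 2 * Real.exp L = b ^ 2 := by
    rw [hε2, mul_assoc, ← Real.exp_add]; simp
  have hεb : ε ≤ b := by
    have h1 : Real.exp (-(L/2)) ≤ 1 := by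
      rw [← Real.exp_zero]; exact Real.exp_le_exp.2 (by linarith)
    calc ε = b * Real.exp (-(L/2)) := hεdef
      _ ≤ b * 1 := by nlinarith
      _ = b := mul_one b
  -- the bump function
  set q : EuclideanSpace ℝ (Fin 2) → ℝ := fun x => ‖x - c‖ ^ 2 + ε ^ 2 with hqdef
  have hqpos : ∀ x, 0 < q x := fun x => by positivity
  set u : EuclideanSpace ℝ (Fin 2) → ℝ :=
    fun x => L⁻¹ * (Real.log (q x) - Real.log (ε ^ 2)) with hudef
  set ρ : EuclideanSpace ℝ (Fin 2) → ℝ := fun x => χ (u x) with hρdef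
  have hqcd : ContDiff ℝ ∞ q :=
    (ContDiff.norm_sq (𝕜 := ℝ) (contDiff_id.sub contDiff_const)).add contDiff_const
  have hucd : ContDiff ℝ ∞ u :=
    contDiff_const.mul ((hqcd.log fun x => (hqpos x).ne').sub contDiff_const)
  have hρcd : ContDiff ℝ ∞ ρ := hχcd.comp hucd
  have hρc : ρ c = 1 := by
    have hqc : q c = ε ^ 2 := by simp [hqdef]
    have h0 : u c = 0 := by rw [hudef]; simp [hqc]
    rw [hρdef]; simp only [h0]; exact hχ1 0 le_rfl
  have hρmem : ∀ x, 0 ≤ ρ x ∧ ρ x ≤ 1 := fun x => hχmem _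
  -- support
  have hsupp0 : ∀ x, b ≤ ‖x - c‖ → ρ x = 0 := by
    intro x hx
    have hq : b ^ 2 ≤ q x := by
      have h1 : b ^ 2 ≤ ‖x - c‖ ^ 2 := by nlinarith [norm_nonneg (x - c)]
      rw [hqdef]; dsimp only; nlinarith [sq_nonneg ε]
    have hlog : Real.log (ε ^ 2) + L ≤ Real.log (q x) := by
      have h1 : Real.log (b ^ 2) ≤ Real.log (q x) :=
        Real.log_le_log (by positivity) hq
      have h2 : Real.log (b ^ 2) = Real.log (ε ^ 2) + L := by
        rw [← hb2, Real.log_mul (by positivity) (Real.exp_ne_zero L), Real.log_exp]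
      linarith
    have hu1 : 1 ≤ u x := by
      show 1 ≤ L⁻¹ * (Real.log (q x) - Real.log (ε ^ 2))
      rw [inv_mul_eq_div, le_div_iff₀ hLpos]
      linarith
    exact hχ0 _ hu1
  have htsupp : tsupport ρ ⊆ Metric.closedBall c b := by
    have h1 : Function.support ρ ⊆ Metric.ball c b := by
      intro x hx
      rw [Function.mem_support] at hx
      rw [Metric.mem_ball, dist_eq_norm]
      by_contra h
      exact hx (hsupp0 x (le_of_not_gt h))
    exact (closure_mono h1).trans Metric.closure_ball_subset_closedBall
  -- pointwise gradient bound
  have hgradb : ∀ x, ‖gradient ρ x‖ ≤ (2 * C / L) * (‖x - c‖ / q x) := by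
    intro x
    have hq' : HasFDerivAt q ((2:ℝ) • (innerSL ℝ (x - c))) x := by
      have h1 : HasFDerivAt (fun y : EuclideanSpace ℝ (Fin 2) => y - c)
          (ContinuousLinearMap.id ℝ (EuclideanSpace ℝ (Fin 2))) x :=
        (hasFDerivAt_id x).sub_const c
      have h2 := h1.norm_sq
      have h3 := h2.add_const (ε ^ 2)
      have h4 : ((2:ℕ) • (innerSL ℝ (x - c)).comp
          (ContinuousLinearMap.id ℝ (EuclideanSpace ℝ (Fin 2))))
          = (2:ℝ) • (innerSL ℝ (x - c)) := by
        rw [ContinuousLinearMap.comp_id]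
        ext y; simp [two_smul]
      rw [h4] at h3
      exact h3
    have hu' : HasFDerivAt u (L⁻¹ • ((q x)⁻¹ • ((2:ℝ) • (innerSL ℝ (x - c))))) x := by
      have hlog : HasFDerivAt (fun y => Real.log (q y))
          ((q x)⁻¹ • ((2:ℝ) • (innerSL ℝ (x - c)))) x :=
        (Real.hasDerivAt_log (hqpos x).ne').comp_hasFDerivAt x hq'
      exact (hlog.sub_const (Real.log (ε ^ 2))).const_mul L⁻¹
    have hχu : HasDerivAt χ (D (u x)) (u x) := (hχdiff (u x)).hasDerivAt
    have hρ' : HasFDerivAt ρ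
        ((D (u x)) • (L⁻¹ • ((q x)⁻¹ • ((2:ℝ) • (innerSL ℝ (x - c)))))) x :=
      hχu.comp_hasFDerivAt x hu'
    have hng : ‖gradient ρ x‖ = ‖fderiv ℝ ρ x‖ :=
      (InnerProductSpace.toDual ℝ (EuclideanSpace ℝ (Fin 2))).symm.norm_map _
    rw [hng, hρ'.fderiv]
    rw [norm_smul, norm_smul, norm_smul, norm_smul]
    rw [innerSL_apply_norm]
    simp only [Real.norm_eq_abs]
    rw [abs_of_pos (inv_pos.2 hLpos), abs_of_pos (inv_pos.2 (hqpos x)),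
      abs_of_pos (by norm_num : (0:ℝ) < 2)]
    have h5 : |D (u x)| * (L⁻¹ * ((q x)⁻¹ * (2 * ‖x - c‖)))
        ≤ C * (L⁻¹ * ((q x)⁻¹ * (2 * ‖x - c‖))) := by
      apply mul_le_mul_of_nonneg_right (hCb _)
      positivity
    calc |D (u x)| * (L⁻¹ * ((q x)⁻¹ * (2 * ‖x - c‖)))
        ≤ C * (L⁻¹ * ((q x)⁻¹ * (2 * ‖x - c‖))) := h5
      _ = (2 * C / L) * (‖x - c‖ / q x) := by field_simp
  refine ⟨ρ, hρcd, hρmem, htsupp, hρc, ?_⟩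
  -- the energy estimate
  set K' : ℝ := (2 * C / L) ^ 2 with hK'def
  have hK'0 : 0 ≤ K' := sq_nonneg _
  set g2 : EuclideanSpace ℝ (Fin 2) → ℝ := fun x => ‖gradient ρ x‖ ^ 2 with hg2def
  have hgradeq : gradient ρ = fun x =>
      (InnerProductSpace.toDual ℝ (EuclideanSpace ℝ (Fin 2))).symm (fderiv ℝ ρ x) := rfl
  have hgrad0 : ∀ x, x ∉ tsupport ρ → gradient ρ x = 0 := by
    intro x hx
    have hfz : fderiv ℝ ρ x = 0 := by
      by_contra h
      exact hx (support_fderiv_subset ℝ (Function.mem_support.2 h))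
    rw [hgradeq]
    simp [hfz]
  have hg2cont : Continuous g2 := by
    have h1 : Continuous (gradient ρ) := by
      rw [hgradeq]
      exact (LinearIsometryEquiv.continuous _).comp (hρcd.continuous_fderiv (lt_of_lt_of_le zero_lt_one hone).ne')
    exact (h1.norm).pow 2
  have hcompg2 : HasCompactSupport g2 :=
    HasCompactSupport.intro (isCompact_closedBall c b) fun x hx => by
      rw [hg2def]; simp [hgrad0 x fun h => hx (htsupp h)]
  have hInt1 : Integrable g2 := hg2cont.integrable_of_hasCompactSupport hcompg2
  -- the radial dominating function
  set F : ℝ → ℝ := Set.indicator (Set.Ioc 0 b) (fun r => K' * (r / (r ^ 2 + ε ^ 2)) ^ 2)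
    with hFdef
  set A : Set (EuclideanSpace ℝ (Fin 2)) := Metric.closedBall c b \ {c} with hAdef
  set G : EuclideanSpace ℝ (Fin 2) → ℝ :=
    fun x => K' * (‖x - c‖ / (‖x - c‖ ^ 2 + ε ^ 2)) ^ 2 with hGdef
  have hFA : ∀ x, F (‖x - c‖) = A.indicator G x := by
    intro x
    by_cases hx : ‖x - c‖ ∈ Set.Ioc 0 b
    · rw [hFdef, Set.indicator_of_mem hx, Set.indicator_of_mem]
      refine ⟨?_, ?_⟩
      · rw [Metric.mem_closedBall, dist_eq_norm]; exact hx.2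
      · simp only [Set.mem_singleton_iff]
        intro h
        rw [h] at hx
        simp at hx
    · rw [hFdef, Set.indicator_of_notMem hx, Set.indicator_of_notMem]
      intro hxa
      apply hx
      constructor
      · rw [norm_pos_iff, sub_ne_zero]
        simpa using hxa.2
      · have h1 := hxa.1
        rwa [Metric.mem_closedBall, dist_eq_norm] at h1
  have hden : Continuous fun x : EuclideanSpace ℝ (Fin 2) => ‖x - c‖ ^ 2 + ε ^ 2 :=
    (((continuous_id.sub continuous_const).norm).pow 2).add continuous_const
  have hGcont : Continuous G :=
    continuous_const.mul ((((continuous_id.sub continuous_const).norm).div hden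
      fun x => by positivity).pow 2)
  have hMA : MeasurableSet A := measurableSet_closedBall.diff (measurableSet_singleton c)
  have hIntG : IntegrableOn G A volume :=
    ((hGcont.continuousOn).integrableOn_compact (isCompact_closedBall c b)).mono_set
      Set.diff_subset
  have hInt2 : Integrable (fun x => F (‖x - c‖)) := by
    rw [show (fun x => F (‖x - c‖)) = A.indicator G from funext hFA]
    exact hIntG.integrable_indicator hMA
  -- pointwise bound
  have hpt : ∀ x, g2 x ≤ F (‖x - c‖) := by
    intro x
    have hsq : g2 x ≤ ((2 * C / L) * (‖x - c‖ / (‖x - c‖ ^ 2 + ε ^ 2))) ^ 2 :=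
      pow_le_pow_left₀ (norm_nonneg _) (hgradb x) 2
    by_cases hxb : ‖x - c‖ ≤ b
    · by_cases hx0 : 0 < ‖x - c‖
      · have hF : F (‖x - c‖) = K' * (‖x - c‖ / (‖x - c‖ ^ 2 + ε ^ 2)) ^ 2 := by
          rw [hFdef]; exact Set.indicator_of_mem (Set.mem_Ioc.mpr ⟨hx0, hxb⟩) _
        rw [hF]
        calc g2 x ≤ ((2 * C / L) * (‖x - c‖ / (‖x - c‖ ^ 2 + ε ^ 2))) ^ 2 := hsq
          _ = K' * (‖x - c‖ / (‖x - c‖ ^ 2 + ε ^ 2)) ^ 2 := by rw [hK'def, mul_pow]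
      · have h0 : ‖x - c‖ = 0 := le_antisymm (not_lt.1 hx0) (norm_nonneg _)
        have h1 : g2 x ≤ 0 := by rw [h0] at hsq; simpa using hsq
        have hF : F (‖x - c‖) = 0 := by
          rw [h0, hFdef, Set.indicator_of_notMem (by simp)]
        linarith
    · have hx' : x ∉ tsupport ρ := fun h => hxb (by
        have h1 := htsupp h
        rwa [Metric.mem_closedBall, dist_eq_norm] at h1)
      have hF : F (‖x - c‖) = 0 := by
        rw [hFdef, Set.indicator_of_notMem (fun h => hxb h.2)]
      rw [hF, hg2def]
      simp [hgrad0 x hx']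
  have hmono : (∫ x, g2 x) ≤ ∫ x, F (‖x - c‖) := integral_mono hInt1 hInt2 hpt
  have htransl : (∫ x, F (‖x - c‖)) = ∫ x : EuclideanSpace ℝ (Fin 2), F (‖x‖) :=
    integral_sub_right_eq_self (fun x : EuclideanSpace ℝ (Fin 2) => F ‖x‖) c
  have hvol : (volume (Metric.ball (0 : EuclideanSpace ℝ (Fin 2)) 1)).toReal = Real.pi := by
    rw [EuclideanSpace.volume_ball, Fintype.card_fin]
    norm_num [Real.Gamma_two, Real.sq_sqrt hπ.le, ENNReal.toReal_ofReal hπ.le]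
  set J : ℝ := ∫ y in Set.Ioi (0:ℝ), y ^ (2 - 1) • F y with hJdef
  have hpolar : (∫ x : EuclideanSpace ℝ (Fin 2), F (‖x‖))
      = 2 • (volume (Metric.ball (0 : EuclideanSpace ℝ (Fin 2)) 1)).toReal • J := by
    have h := integral_fun_norm_addHaar (volume : Measure (EuclideanSpace ℝ (Fin 2))) F
    rwa [finrank_euclideanSpace_fin] at h
  have hJeq : J = ∫ y in (0:ℝ)..b, y * (K' * (y / (y ^ 2 + ε ^ 2)) ^ 2) := by
    have h1 : (fun y : ℝ => y ^ (2-1) • F y) = fun y =>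
        Set.indicator (Set.Ioc 0 b) (fun y => y * (K' * (y / (y ^ 2 + ε ^ 2)) ^ 2)) y := by
      funext y
      rw [pow_one, smul_eq_mul]
      by_cases hy : y ∈ Set.Ioc (0:ℝ) b
      · rw [hFdef, Set.indicator_of_mem hy, Set.indicator_of_mem hy]
      · rw [hFdef, Set.indicator_of_notMem hy, Set.indicator_of_notMem hy, mul_zero]
    rw [hJdef, h1, setIntegral_indicator measurableSet_Ioc,
      Set.inter_eq_self_of_subset_right Set.Ioc_subset_Ioi_self,
      ← intervalIntegral.integral_of_le hb.le]
  have hdenR : ∀ y : ℝ, (0:ℝ) < y ^ 2 + ε ^ 2 := fun y => by positivity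
  have hcont1 : Continuous fun y : ℝ => y * (K' * (y / (y ^ 2 + ε ^ 2)) ^ 2) :=
    continuous_id.mul (continuous_const.mul ((continuous_id.div
      (((continuous_id.pow 2)).add continuous_const) fun y => (hdenR y).ne').pow 2))
  have hcont2 : Continuous fun y : ℝ => y / (y ^ 2 + ε ^ 2) :=
    continuous_id.div (((continuous_id.pow 2)).add continuous_const) fun y => (hdenR y).ne'
  have hJ2 : (∫ y in (0:ℝ)..b, y * (K' * (y / (y ^ 2 + ε ^ 2)) ^ 2))
      ≤ ∫ y in (0:ℝ)..b, K' * (y / (y ^ 2 + ε ^ 2)) := by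
    apply intervalIntegral.integral_mono_on hb.le
      (hcont1.intervalIntegrable 0 b) ((continuous_const.mul hcont2).intervalIntegrable 0 b)
    intro y hy
    have hy0 : 0 ≤ y := hy.1
    have hd : 0 < y ^ 2 + ε ^ 2 := hdenR y
    have h1 : y ^ 2 / (y ^ 2 + ε ^ 2) ≤ 1 := div_le_one_of_le₀ (by nlinarith) hd.le
    have h2 : 0 ≤ y / (y ^ 2 + ε ^ 2) := by positivity
    calc y * (K' * (y / (y ^ 2 + ε ^ 2)) ^ 2)
        = K' * ((y ^ 2 / (y ^ 2 + ε ^ 2)) * (y / (y ^ 2 + ε ^ 2))) := by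
          field_simp
      _ ≤ K' * (1 * (y / (y ^ 2 + ε ^ 2))) := by
          apply mul_le_mul_of_nonneg_left _ hK'0
          exact mul_le_mul_of_nonneg_right h1 h2
      _ = K' * (y / (y ^ 2 + ε ^ 2)) := by ring
  have hlogint : (∫ y in (0:ℝ)..b, y / (y ^ 2 + ε ^ 2))
      = (1/2) * Real.log (b ^ 2 + ε ^ 2) - (1/2) * Real.log (ε ^ 2) := by
    have hderiv : ∀ y ∈ Set.uIcc (0:ℝ) b,
        HasDerivAt (fun y : ℝ => (1/2) * Real.log (y ^ 2 + ε ^ 2))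
          (y / (y ^ 2 + ε ^ 2)) y := by
      intro y _
      have h1 : HasDerivAt (fun y : ℝ => y ^ 2 + ε ^ 2) (2 * y) y := by
        simpa using (hasDerivAt_pow 2 y).add_const (ε ^ 2)
      have h2 := (Real.hasDerivAt_log (hdenR y).ne').comp y h1
      have h3 := h2.const_mul (1/2 : ℝ)
      refine h3.congr_deriv ?_
      ring
    have h4 := intervalIntegral.integral_eq_sub_of_hasDerivAt hderiv
      (hcont2.intervalIntegrable 0 b)
    rw [h4]
    norm_num
  have hloge : Real.log (b ^ 2 + ε ^ 2) - Real.log (ε ^ 2) ≤ 2 * L := by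
    have he2 : (2:ℝ) ≤ Real.exp L := by nlinarith [Real.add_one_le_exp L]
    have hble : b ^ 2 + ε ^ 2 ≤ ε ^ 2 * Real.exp (2 * L) := by
      have hbe : b ^ 2 = ε ^ 2 * Real.exp L := hb2.symm
      have hexp2L : Real.exp (2 * L) = Real.exp L * Real.exp L := by
        rw [two_mul, Real.exp_add]
      nlinarith [Real.exp_pos L, sq_nonneg ε, hε]
    have h1 : Real.log (b ^ 2 + ε ^ 2) ≤ Real.log (ε ^ 2 * Real.exp (2 * L)) :=
      Real.log_le_log (by positivity) hble
    rw [Real.log_mul (by positivity) (Real.exp_ne_zero _), Real.log_exp] at h1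
    linarith
  have hJle : J ≤ K' * L := by
    rw [hJeq]
    calc (∫ y in (0:ℝ)..b, y * (K' * (y / (y ^ 2 + ε ^ 2)) ^ 2))
        ≤ ∫ y in (0:ℝ)..b, K' * (y / (y ^ 2 + ε ^ 2)) := hJ2
      _ = K' * ∫ y in (0:ℝ)..b, y / (y ^ 2 + ε ^ 2) := intervalIntegral.integral_const_mul _ _
      _ = K' * ((1/2) * Real.log (b ^ 2 + ε ^ 2) - (1/2) * Real.log (ε ^ 2)) := by
          rw [hlogint]
      _ ≤ K' * L := mul_le_mul_of_nonneg_left (by linarith) hK'0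
  calc (∫ x, g2 x) ≤ ∫ x, F (‖x - c‖) := hmono
    _ = ∫ x : EuclideanSpace ℝ (Fin 2), F (‖x‖) := htransl
    _ = 2 * (Real.pi * J) := by
        rw [hpolar, hvol, nsmul_eq_mul, smul_eq_mul]
        norm_num
    _ ≤ 2 * (Real.pi * (K' * L)) :=
        mul_le_mul_of_nonneg_left (mul_le_mul_of_nonneg_left hJle hπ.le) (by norm_num)
    _ = 8 * Real.pi * C ^ 2 / L := by rw [hK'def]; field_simp; ring
    _ < δ := hLδ

end AuxBumpConstruction

/-- **Bump functions of small Dirichlet energy in the plane.**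
For every `0 < r₀ < 1` and `N ≥ 1` there exist smooth functions `ρ₁, …, ρ_N : ℝ² → ℝ` with
`0 ≤ ρₖ ≤ 1`, with compact supports contained in the open ball `B_{r₀}(0)`, pairwise
disjoint supports, Dirichlet energy `∫ |∇ρₖ|² < 2π/N`, each attaining the value `1`. -/
theorem exists_disjoint_bumps_small_energy
    (r₀ : ℝ) (hr₀ : 0 < r₀) (hr₀1 : r₀ < 1) (N : ℕ) (hN : 1 ≤ N) :
    ∃ ρ : Fin N → EuclideanSpace ℝ (Fin 2) → ℝ,
      (∀ k, ContDiff ℝ ∞ (ρ k)) ∧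
      (∀ k x, 0 ≤ ρ k x ∧ ρ k x ≤ 1) ∧
      (∀ k, HasCompactSupport (ρ k) ∧
        tsupport (ρ k) ⊆ Metric.ball (0 : EuclideanSpace ℝ (Fin 2)) r₀) ∧
      (∀ k h, k ≠ h → Disjoint (tsupport (ρ k)) (tsupport (ρ h))) ∧
      (∀ k, (∫ x, ‖gradient (ρ k) x‖ ^ 2) < 2 * Real.pi / N) ∧
      (∀ k, ∃ x, ρ k x = 1) := by
  classical
  have hN0 : (0:ℝ) < N := by exact_mod_cast Nat.lt_of_lt_of_le Nat.zero_lt_one hN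
  have hN1 : (1:ℝ) ≤ N := by exact_mod_cast hN
  set b : ℝ := r₀ / (8 * N) with hbdef
  have hb : 0 < b := by positivity
  have hr8 : r₀ = 8 * N * b := by rw [hbdef]; field_simp
  set v : EuclideanSpace ℝ (Fin 2) := EuclideanSpace.single (0 : Fin 2) (1:ℝ) with hvdef
  have hv : ‖v‖ = 1 := by rw [hvdef, EuclideanSpace.norm_single]; norm_num
  set cc : Fin N → EuclideanSpace ℝ (Fin 2) := fun k => (((k : ℕ) : ℝ) * (4 * b)) • v
    with hccdef
  have hδ : 0 < 2 * Real.pi / N := by positivity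
  choose ρ hρcd hρmem htsupp hρc henergy using fun k : Fin N =>
    aux_exists_bump (cc k) b (2 * Real.pi / N) hb hδ
  have hball : ∀ k, Metric.closedBall (cc k) b ⊆
      Metric.ball (0 : EuclideanSpace ℝ (Fin 2)) r₀ := by
    intro k x hx
    rw [Metric.mem_closedBall] at hx
    rw [Metric.mem_ball, dist_zero_right]
    have hkN : ((k : ℕ) : ℝ) ≤ (N : ℝ) - 1 := by
      have h1 : (k : ℕ) + 1 ≤ N := k.isLt
      have h2 : ((k : ℕ) : ℝ) + 1 ≤ (N : ℝ) := by exact_mod_cast h1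
      linarith
    have hcknorm : ‖cc k‖ = ((k : ℕ) : ℝ) * (4 * b) := by
      rw [hccdef]
      dsimp only
      rw [norm_smul, hv, mul_one, Real.norm_eq_abs, abs_of_nonneg (by positivity)]
    have h3 : ‖x‖ ≤ dist x (cc k) + ‖cc k‖ := by
      calc ‖x‖ = dist x 0 := (dist_zero_right x).symm
        _ ≤ dist x (cc k) + dist (cc k) 0 := dist_triangle _ _ _
        _ = dist x (cc k) + ‖cc k‖ := by rw [dist_zero_right]
    have h4 : ((k : ℕ) : ℝ) * (4 * b) ≤ ((N : ℝ) - 1) * (4 * b) :=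
      mul_le_mul_of_nonneg_right hkN (by positivity)
    rw [hr8]
    nlinarith [hb, hN1]
  refine ⟨ρ, hρcd, fun k x => hρmem k x, fun k => ⟨?_, (htsupp k).trans (hball k)⟩,
    ?_, henergy, fun k => ⟨cc k, hρc k⟩⟩
  · exact IsCompact.of_isClosed_subset (isCompact_closedBall (cc k) b)
      (isClosed_tsupport _) (htsupp k)
  · intro k h hkh
    apply Set.disjoint_of_subset (htsupp k) (htsupp h)
    apply Metric.closedBall_disjoint_closedBall
    have hdist : dist (cc k) (cc h) = |((k : ℕ) : ℝ) - ((h : ℕ) : ℝ)| * (4 * b) := by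
      rw [hccdef]
      dsimp only
      rw [dist_eq_norm, ← sub_smul, norm_smul, hv, mul_one, Real.norm_eq_abs, ← sub_mul,
        abs_mul, abs_of_nonneg (by positivity : (0:ℝ) ≤ 4 * b)]
    have hne : ((k : ℕ) : ℤ) - ((h : ℕ) : ℤ) ≠ 0 := by
      rw [sub_ne_zero]
      intro hc
      apply hkh
      apply Fin.ext
      exact_mod_cast hc
    have h1 : (1:ℤ) ≤ |((k : ℕ) : ℤ) - ((h : ℕ) : ℤ)| := Int.one_le_abs hne
    have h2 : (1:ℝ) ≤ |((k : ℕ) : ℝ) - ((h : ℕ) : ℝ)| := by exact_mod_cast h1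
    rw [hdist]
    nlinarith [hb]
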